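/- Let n ≥ 2, τ, o ∈ ℝⁿ, d_c > 0 with ‖o - τ‖ > 2·d_c, and ε > 1/d_c. Define B(x) = ‖x - τ‖² / (‖x - o‖ - d_c + 1/ε). Then for every x ∈ ℝⁿ with ‖x - o‖ > d_c, the gradient ∇B(x) equals 0 if and only if x = τ or x = τ + 2·(‖o - τ‖ + d_c - 1/ε)·(o - τ)/‖o - τ‖. -/

import Mathlib

variable {F : Type*} [NormedAddCommGroup F] [InnerProductSpace ℝ F] [CompleteSpace F]

lemma aux_grad (τ o : F) (dc ε : ℝ) (x : F) (hb : x - o ≠ 0)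
    (hg : ‖x - o‖ - dc + 1/ε ≠ 0) :
    gradient (fun y => ‖y - τ‖ ^ 2 / (‖y - o‖ - dc + 1/ε)) x
      = ((‖x - o‖ - dc + 1/ε) ^ 2)⁻¹ •
        ((2 * (‖x - o‖ - dc + 1/ε)) • (x - τ) - (‖x - τ‖ ^ 2 / ‖x - o‖) • (x - o)) := by
  have hxo : ‖x - o‖ ≠ 0 := norm_ne_zero_iff.2 hb
  have hf' : HasFDerivAt (fun y : F => ‖y - τ‖ ^ 2) (2 • innerSL ℝ (x - τ)) x := by
    simpa using ((hasFDerivAt_id x).sub_const τ).norm_sq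
  have h1 : HasFDerivAt (fun y : F => ‖y - o‖ ^ 2) (2 • innerSL ℝ (x - o)) x := by
    simpa using ((hasFDerivAt_id x).sub_const o).norm_sq
  have h2 : HasDerivAt Real.sqrt (1 / (2 * Real.sqrt (‖x - o‖ ^ 2))) (‖x - o‖ ^ 2) :=
    Real.hasDerivAt_sqrt (pow_ne_zero 2 hxo)
  have hno : HasFDerivAt (fun y : F => ‖y - o‖) (‖x - o‖⁻¹ • innerSL ℝ (x - o)) x := by
    have h3 := h2.comp_hasFDerivAt x h1
    have heq : (fun y : F => ‖y - o‖) = fun y : F => Real.sqrt (‖y - o‖ ^ 2) := by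
      funext y; rw [Real.sqrt_sq (norm_nonneg _)]
    rw [heq]
    refine h3.congr_fderiv ?_
    symm
    rw [Real.sqrt_sq (norm_nonneg _)]
    ext v
    simp only [ContinuousLinearMap.smul_apply, smul_eq_mul, ContinuousLinearMap.coe_smul',
      Pi.smul_apply]
    push_cast
    field_simp
    ring
  have hgfun : HasFDerivAt (fun y : F => ‖y - o‖ - dc + 1/ε) (‖x - o‖⁻¹ • innerSL ℝ (x - o)) x :=
    (hno.sub_const dc).add_const (1/ε)
  have hinv : HasFDerivAt (fun y : F => (‖y - o‖ - dc + 1/ε)⁻¹)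
      ((-((‖x - o‖ - dc + 1/ε) ^ 2)⁻¹) • (‖x - o‖⁻¹ • innerSL ℝ (x - o))) x :=
    (hasDerivAt_inv hg).comp_hasFDerivAt x hgfun
  have hmul := hf'.mul hinv
  simp only [Pi.mul_def, ← div_eq_mul_inv] at hmul
  have hgr : HasGradientAt (fun y : F => ‖y - τ‖ ^ 2 / (‖y - o‖ - dc + 1/ε))
      (((‖x - o‖ - dc + 1/ε) ^ 2)⁻¹ •
        ((2 * (‖x - o‖ - dc + 1/ε)) • (x - τ) - (‖x - τ‖ ^ 2 / ‖x - o‖) • (x - o))) x := by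
    rw [hasGradientAt_iff_hasFDerivAt]
    refine hmul.congr_fderiv ?_
    symm
    ext v
    simp only [InnerProductSpace.toDual_apply_apply, inner_smul_left, inner_sub_left,
      ContinuousLinearMap.add_apply, ContinuousLinearMap.smul_apply, innerSL_apply_apply,
      smul_eq_mul, conj_trivial, ContinuousLinearMap.coe_smul', Pi.smul_apply]
    field_simp
    ring
  exact hgr.gradient

lemma aux_alg (τ o x : F) (dc c : ℝ) (hc : 0 < c) (hcd : c < dc) (hdc : 0 < dc)
    (hsep : 2 * dc < ‖o - τ‖) (hx : dc < ‖x - o‖) :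
    (2 * (‖x - o‖ - c)) • (x - τ) - (‖x - τ‖ ^ 2 / ‖x - o‖) • (x - o) = 0 ↔
      x = τ ∨ x = τ + (2 * (‖o - τ‖ + c) / ‖o - τ‖) • (o - τ) := by
  have hr : 0 < ‖o - τ‖ := lt_trans (by positivity) hsep
  have hβ : 0 < ‖x - o‖ := lt_trans hdc hx
  constructor
  · intro hG
    rcases eq_or_ne x τ with h | h
    · exact Or.inl h
    right
    have ha0 : x - τ ≠ 0 := sub_ne_zero.2 h
    have hαpos : 0 < ‖x - τ‖ := norm_pos_iff.2 ha0
    set α := ‖x - τ‖ with hαdef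
    set β := ‖x - o‖ with hβdef
    set r := ‖o - τ‖ with hrdef
    have heq : (2 * (β - c)) • (x - τ) = (α ^ 2 / β) • (x - o) := sub_eq_zero.1 hG
    have hβc : 0 < β - c := sub_pos.2 (lt_trans hcd hx)
    have hα2 : 2 * (β - c) * α = α ^ 2 := by
      have hn := congrArg norm heq
      rw [norm_smul, norm_smul, Real.norm_eq_abs, Real.norm_eq_abs,
        abs_of_pos (by positivity), abs_of_pos (by positivity), ← hαdef, ← hβdef,
        div_mul_cancel₀ _ hβ.ne'] at hn
      exact hn
    have hαval : α = 2 * (β - c) :=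
      (mul_right_cancel₀ hαpos.ne' (hα2.trans (pow_two α))).symm
    have hbeq : x - o = (β / α) • (x - τ) := by
      have h2 : x - o = ((α ^ 2 / β)⁻¹ * (2 * (β - c))) • (x - τ) := by
        rw [mul_smul, heq, inv_smul_smul₀ (by positivity)]
      rw [h2]
      congr 1
      rw [← hαval]
      field_simp
    have hoτ : o - τ = ((α - β) / α) • (x - τ) := by
      have h3 : o - τ = (x - τ) - (x - o) := by abel
      rw [h3, hbeq]
      have h4 : (x - τ) - (β / α) • (x - τ) = (1 - β / α) • (x - τ) := by
        rw [sub_smul, one_smul]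
      rw [h4]
      congr 1
      field_simp
    have hrval : r = |α - β| := by
      have h5 := congrArg norm hoτ
      rw [norm_smul, Real.norm_eq_abs, abs_div, abs_of_pos hαpos, ← hαdef, ← hrdef,
        div_mul_cancel₀ _ hαpos.ne'] at h5
      exact h5
    have hab : α - β = β - 2 * c := by rw [hαval]; ring
    have hβ2c : 0 < β - 2 * c := by
      by_contra hle
      push_neg at hle
      rw [hab, abs_of_nonpos hle] at hrval
      have : r = 2 * c - β := by rw [hrval]; ring
      linarith
    have hrv : r = β - 2 * c := by rw [hrval, hab, abs_of_pos hβ2c]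
    have haeq : x - τ = (α / r) • (o - τ) := by
      rw [hoτ, smul_smul]
      have h6 : α / r * ((α - β) / α) = 1 := by
        rw [hab, ← hrv]; field_simp
      rw [h6, one_smul]
    have hx' : x = (α / r) • (o - τ) + τ := sub_eq_iff_eq_add.mp haeq
    have hαr : α = 2 * (r + c) := by
      have hβr : β = r + 2 * c := by linarith
      rw [hαval, hβr]; ring
    rw [hx', hαr, add_comm]
  · rintro (rfl | rfl)
    · simp
    · set r := ‖o - τ‖ with hrdef
      set s := 2 * (r + c) / r with hsdef
      have hs1 : s - 1 = (r + 2 * c) / r := by rw [hsdef]; field_simp; ring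
      have hs1pos : 0 < s - 1 := by rw [hs1]; positivity
      have hspos : 0 < s := by rw [hsdef]; positivity
      have hxτ : (τ + s • (o - τ)) - τ = s • (o - τ) := by abel
      have hxo : (τ + s • (o - τ)) - o = (s - 1) • (o - τ) := by
        rw [sub_smul, one_smul]; abel
      rw [hxτ, hxo, norm_smul, norm_smul, Real.norm_eq_abs, Real.norm_eq_abs,
        abs_of_pos hspos, abs_of_pos hs1pos, ← hrdef, smul_smul, smul_smul, ← sub_smul,
        smul_eq_zero]
      left
      have hs1r : (s - 1) * r = r + 2 * c := by
        rw [hs1]; field_simp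
      rw [hs1r]
      have hrc : r + 2 * c ≠ 0 := by positivity
      rw [hsdef]
      field_simp
      ring

/-- Critical points of the barrier function: on the safe region `‖x - o‖ > d_c`,
the gradient of `B(x) = ‖x-τ‖²/(‖x-o‖-d_c+1/ε)` vanishes exactly at the goal `τ`
and at the point `τ + 2(‖o-τ‖+d_c-1/ε)/‖o-τ‖ · (o-τ)`. -/
theorem stmt_8 (n : ℕ) (hn : 2 ≤ n) (τ o : EuclideanSpace ℝ (Fin n))
    (dc ε : ℝ) (hdc : 0 < dc) (hsep : 2 * dc < ‖o - τ‖) (hε : 1 / dc < ε)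
    (B : EuclideanSpace ℝ (Fin n) → ℝ)
    (hB : ∀ y, B y = ‖y - τ‖ ^ 2 / (‖y - o‖ - dc + 1 / ε)) :
    ∀ x : EuclideanSpace ℝ (Fin n), dc < ‖x - o‖ →
      (gradient B x = 0 ↔
        x = τ ∨ x = τ + (2 * (‖o - τ‖ + dc - 1 / ε) / ‖o - τ‖) • (o - τ)) := by
  intro x hx
  have hε0 : 0 < ε := lt_trans (by positivity) hε
  have hεdc : 1 / ε < dc := by
    rw [div_lt_iff₀ hε0]
    have h1 : 1 < ε * dc := (div_lt_iff₀ hdc).1 hε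
    nlinarith
  have hc : 0 < dc - 1 / ε := sub_pos.2 hεdc
  have hβ : 0 < ‖x - o‖ := lt_trans hdc hx
  have hb : x - o ≠ 0 := norm_pos_iff.1 hβ
  have hgpos : 0 < ‖x - o‖ - dc + 1 / ε := by
    have : 0 < 1 / ε := by positivity
    linarith
  have hBfun : B = fun y => ‖y - τ‖ ^ 2 / (‖y - o‖ - dc + 1 / ε) := funext hB
  rw [hBfun, aux_grad τ o dc ε x hb hgpos.ne', smul_eq_zero,
    or_iff_right (a := ((‖x - o‖ - dc + 1 / ε) ^ 2)⁻¹ = 0) (by positivity)]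
  have h2 : 2 * (‖x - o‖ - dc + 1 / ε) = 2 * (‖x - o‖ - (dc - 1 / ε)) := by ring
  have h3 : 2 * (‖o - τ‖ + dc - 1 / ε) / ‖o - τ‖ = 2 * (‖o - τ‖ + (dc - 1 / ε)) / ‖o - τ‖ := by
    ring_nf
  rw [h2, h3]
  exact aux_alg τ o x dc (dc - 1 / ε) hc (by linarith [one_div_pos.2 hε0]) hdc hsep hx
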